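/- Let d be a positive integer, let K ⊆ ℝ^d be a convex set, and let F : ℝ^d → ℝ be a convex function differentiable at a point w and at a point x* ∈ K. Define the Bregman divergence D_F(y, z) = F(y) − F(z) − ⟨y − z, ∇F(z)⟩. Suppose x* minimizes y ↦ D_F(y, w) over K, i.e., D_F(x*, w) ≤ D_F(y, w) for all y ∈ K. Then for every a ∈ K, D_F(a, w) ≥ D_F(a, x*) + D_F(x*, w). -/

import Mathlib

open scoped RealInnerProductSpace

theorem stmt_14 (d : ℕ) (hd : 0 < d)
    (K : Set (EuclideanSpace ℝ (Fin d))) (hK : Convex ℝ K)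
    (F : EuclideanSpace ℝ (Fin d) → ℝ) (hF : ConvexOn ℝ Set.univ F)
    (w xstar : EuclideanSpace ℝ (Fin d)) (hxstar : xstar ∈ K)
    (gw gx : EuclideanSpace ℝ (Fin d))
    (hgw : HasGradientAt F gw w) (hgx : HasGradientAt F gx xstar)
    (hmin : ∀ y ∈ K, F xstar - F w - ⟪xstar - w, gw⟫ ≤ F y - F w - ⟪y - w, gw⟫)
    (a : EuclideanSpace ℝ (Fin d)) (ha : a ∈ K) :
    F a - F w - ⟪a - w, gw⟫ ≥
      (F a - F xstar - ⟪a - xstar, gx⟫) + (F xstar - F w - ⟪xstar - w, gw⟫) := by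
  set v : EuclideanSpace ℝ (Fin d) := a - xstar with hv
  -- the curve t ↦ xstar + t • v
  have hcurve : HasDerivAt (fun t : ℝ => xstar + t • v) v 0 := by
    simpa using ((hasDerivAt_id (0:ℝ)).smul_const v).const_add xstar
  have hcomp : HasDerivAt (fun t : ℝ => F (xstar + t • v)) ⟪gx, v⟫ 0 := by
    have h := hgx.hasFDerivAt
    rw [show xstar = xstar + (0:ℝ) • v by simp] at h
    have h2 := h.comp_hasDerivAt 0 hcurve
    simp at h2
    exact h2
  -- slopes are bounded below by ⟪v, gw⟫ on (0,1]
  have key : ⟪gx, v⟫ ≥ ⟪v, gw⟫ := by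
    have htend : Filter.Tendsto (slope (fun t : ℝ => F (xstar + t • v)) 0)
        (nhdsWithin 0 (Set.Ioi 0)) (nhds ⟪gx, v⟫) := by
      have := hasDerivAt_iff_tendsto_slope.mp hcomp
      exact this.mono_left (nhdsWithin_mono 0 (fun t ht => ne_of_gt ht))
    refine ge_of_tendsto htend ?_
    filter_upwards [Ioc_mem_nhdsGT_of_mem (Set.left_mem_Ico.mpr one_pos)] with t ht
    obtain ⟨ht0, ht1⟩ := ht
    have hmem : xstar + t • v ∈ K := by
      have := hK hxstar ha (by linarith : (0:ℝ) ≤ 1 - t) ht0.le (by ring)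
      have heq : (1 - t) • xstar + t • a = xstar + t • v := by
        rw [hv]; module
      rwa [heq] at this
    have := hmin _ hmem
    have hinner : ⟪xstar + t • v - w, gw⟫ = ⟪xstar - w, gw⟫ + t * ⟪v, gw⟫ := by
      rw [show xstar + t • v - w = (xstar - w) + t • v by module,
        inner_add_left, real_inner_smul_left]
    have hF' : F (xstar + t • v) - F xstar ≥ t * ⟪v, gw⟫ := by
      rw [hinner] at this; linarith
    rw [slope_def_field]
    simp only [sub_zero, smul_eq_mul, zero_smul, add_zero]
    rw [le_div_iff₀ ht0]
    simpa [mul_comm] using hF'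
  have hsym : ⟪gx, v⟫ = ⟪v, gx⟫ := real_inner_comm _ _
  have hsplit : ⟪a - w, gw⟫ = ⟪a - xstar, gw⟫ + ⟪xstar - w, gw⟫ := by
    rw [← inner_add_left]; norm_num
  rw [hsym, hv] at key
  linarith [key, hsplit]
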